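/- Let p < q be natural numbers, x₁, y₁⁽ᵖ⁾, y₁⁽ᑫ⁾ real numbers, and let g, h_p, h_q : ℝ → ℝ be q-times continuously differentiable. Write D = h_p⁽ᵖ⁾(x₁)·h_q⁽ᑫ⁾(x₁) - h_q⁽ᵖ⁾(x₁)·h_p⁽ᑫ⁾(x₁) and assume D ≠ 0. Then the function y defined by y(x) = g(x) + ((h_q⁽ᑫ⁾(x₁)·h_p(x) - h_q⁽ᵖ⁾(x₁)·h_q(x))/D)·(y₁⁽ᵖ⁾ - g⁽ᵖ⁾(x₁)) + ((h_p⁽ᵖ⁾(x₁)·h_q(x) - h_p⁽ᑫ⁾(x₁)·h_p(x))/D)·(y₁⁽ᑫ⁾ - g⁽ᑫ⁾(x₁)) satisfies y⁽ᵖ⁾(x₁) = y₁⁽ᵖ⁾ and y⁽ᑫ⁾(x₁) = y₁⁽ᑫ⁾, where f⁽ᵏ⁾ denotes the k-th iterated derivative of f. -/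

import Mathlib

lemma iterDeriv_comb {n : ℕ} {f h1 h2 : ℝ → ℝ} (hf : ContDiff ℝ n f)
    (hh1 : ContDiff ℝ n h1) (hh2 : ContDiff ℝ n h2) (a b : ℝ) (x : ℝ) :
    iteratedDeriv n (fun x => f x + a * h1 x + b * h2 x) x
      = iteratedDeriv n f x + a * iteratedDeriv n h1 x + b * iteratedDeriv n h2 x := by
  have h1' : ContDiff ℝ n (fun x => a * h1 x) := hh1.const_smul a
  have h2' : ContDiff ℝ n (fun x => b * h2 x) := hh2.const_smul b
  have e1 : iteratedDeriv n (fun x => a * h1 x) x = a * iteratedDeriv n h1 x := by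
    simp only [iteratedDeriv_eq_iteratedFDeriv]
    rw [show (fun x => a * h1 x) = a • h1 from rfl, iteratedFDeriv_const_smul_apply hh1.contDiffAt]
    simp
  have e2 : iteratedDeriv n (fun x => b * h2 x) x = b * iteratedDeriv n h2 x := by
    simp only [iteratedDeriv_eq_iteratedFDeriv]
    rw [show (fun x => b * h2 x) = b • h2 from rfl, iteratedFDeriv_const_smul_apply hh2.contDiffAt]
    simp
  have eadd : iteratedDeriv n (fun x => f x + a * h1 x + b * h2 x) x
      = iteratedDeriv n (fun x => f x + a * h1 x) x + iteratedDeriv n (fun x => b * h2 x) x := by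
    simp only [iteratedDeriv_eq_iteratedFDeriv]
    rw [show (fun x => f x + a * h1 x + b * h2 x) = (fun x => f x + a * h1 x) + (fun x => b * h2 x) from rfl,
      iteratedFDeriv_add_apply (hf.add h1').contDiffAt h2'.contDiffAt]
    simp
  have eadd2 : iteratedDeriv n (fun x => f x + a * h1 x) x
      = iteratedDeriv n f x + iteratedDeriv n (fun x => a * h1 x) x := by
    simp only [iteratedDeriv_eq_iteratedFDeriv]
    rw [show (fun x => f x + a * h1 x) = f + (fun x => a * h1 x) from rfl,
      iteratedFDeriv_add_apply hf.contDiffAt h1'.contDiffAt]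
    simp
  rw [eadd, eadd2, e1, e2]

theorem two_derivative_constrained_expression
    (p q : ℕ) (hpq : p < q) (x₁ yp yq : ℝ) (g hp hq : ℝ → ℝ)
    (hg : ContDiff ℝ q g) (hhp : ContDiff ℝ q hp) (hhq : ContDiff ℝ q hq)
    (D : ℝ)
    (hD : D = iteratedDeriv p hp x₁ * iteratedDeriv q hq x₁
            - iteratedDeriv p hq x₁ * iteratedDeriv q hp x₁)
    (hD0 : D ≠ 0) :
    (iteratedDeriv p
      (fun x => g x
        + (iteratedDeriv q hq x₁ * hp x - iteratedDeriv q hp x₁ * hq x) / D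
            * (yp - iteratedDeriv p g x₁)
        + (iteratedDeriv p hp x₁ * hq x - iteratedDeriv p hq x₁ * hp x) / D
            * (yq - iteratedDeriv q g x₁)) x₁ = yp)
    ∧ (iteratedDeriv q
      (fun x => g x
        + (iteratedDeriv q hq x₁ * hp x - iteratedDeriv q hp x₁ * hq x) / D
            * (yp - iteratedDeriv p g x₁)
        + (iteratedDeriv p hp x₁ * hq x - iteratedDeriv p hq x₁ * hp x) / D
            * (yq - iteratedDeriv q g x₁)) x₁ = yq) := by
  set a := iteratedDeriv p hp x₁ with ha
  set b := iteratedDeriv q hq x₁ with hb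
  set c := iteratedDeriv p hq x₁ with hc
  set d := iteratedDeriv q hp x₁ with hd
  set Gp := iteratedDeriv p g x₁ with hGp
  set Gq := iteratedDeriv q g x₁ with hGq
  set c1 : ℝ := (b * (yp - Gp) - c * (yq - Gq)) / D with hc1
  set c2 : ℝ := (-d * (yp - Gp) + a * (yq - Gq)) / D with hc2
  have hfun : (fun x => g x
        + (b * hp x - d * hq x) / D * (yp - Gp)
        + (a * hq x - c * hp x) / D * (yq - Gq))
      = (fun x => g x + c1 * hp x + c2 * hq x) := by
    funext x
    rw [hc1, hc2]
    field_simp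
    ring
  have hple : ((p : ℕ∞) : WithTop ℕ∞) ≤ ((q : ℕ∞) : WithTop ℕ∞) := by exact_mod_cast hpq.le
  have hgp : ContDiff ℝ p g := hg.of_le hple
  have hhpp : ContDiff ℝ p hp := hhp.of_le hple
  have hhqp : ContDiff ℝ p hq := hhq.of_le hple
  rw [hfun]
  constructor
  · rw [iterDeriv_comb hgp hhpp hhqp c1 c2 x₁, ← ha, ← hc, ← hGp, hc1, hc2, hD]
    have hD0' : a * b - c * d ≠ 0 := by rw [← hD]; exact hD0
    field_simp
    ring_nf
    have hX : (b * a - c * d) * (b * a - c * d)⁻¹ = 1 := mul_inv_cancel₀ (by rwa [mul_comm b a])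
    linear_combination (yp - Gp) * hX
  · rw [iterDeriv_comb hg hhp hhq c1 c2 x₁, ← hd, ← hb, ← hGq, hc1, hc2, hD]
    have hD0' : a * b - c * d ≠ 0 := by rw [← hD]; exact hD0
    field_simp
    ring_nf
    have hX : (b * a - c * d) * (b * a - c * d)⁻¹ = 1 := mul_inv_cancel₀ (by rwa [mul_comm b a])
    linear_combination (yq - Gq) * hX
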